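/- With η = diag(1,-1,1,...,-1) (k minus signs among 2k entries), the orthogonality constraint on a 2×4 matrix C = [[1,α,0,β],[0,γ,1,δ]] (gauge-fixed on columns 1,3) is equivalent to the 2×2 matrix [[α,β],[γ,δ]] being orthogonal (an element of O(2)); the positive branch is parametrized as α = sinθ, β = -cosθ, γ = cosθ, δ = sinθ, and all Plücker coordinates of C are nonnegative iff sinθ ≥ 0 and cosθ ≥ 0. -/
import Mathlib


open Matrix

set_option maxHeartbeats 1000000 in
/-- For the gauge-fixed 2×4 matrix C = [[1,α,0,β],[0,γ,1,δ]] with η = diag(1,-1,1,-1):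
orthogonality C·η·Cᵀ = 0 is equivalent to [[α,β],[γ,δ]] ∈ O(2); the positive branch
C(θ) = [[1,sinθ,0,-cosθ],[0,cosθ,1,sinθ]] is orthogonal and all its Plücker coordinates
are nonnegative iff sinθ ≥ 0 and cosθ ≥ 0. -/
theorem stmt_12 (α β γ δ θ : ℝ)
    (C : Matrix (Fin 2) (Fin 4) ℝ) (hC : C = !![1, α, 0, β; 0, γ, 1, δ])
    (Cθ : Matrix (Fin 2) (Fin 4) ℝ)
    (hCθ : Cθ = !![1, Real.sin θ, 0, -Real.cos θ; 0, Real.cos θ, 1, Real.sin θ])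
    (η : Matrix (Fin 4) (Fin 4) ℝ) (hη : η = Matrix.diagonal ![(1 : ℝ), -1, 1, -1]) :
    (C * η * Cᵀ = 0 ↔ !![α, β; γ, δ] * (!![α, β; γ, δ])ᵀ = 1) ∧
    Cθ * η * Cθᵀ = 0 ∧
    ((∀ i j : Fin 4, i < j → 0 ≤ Cθ 0 i * Cθ 1 j - Cθ 0 j * Cθ 1 i) ↔
      0 ≤ Real.sin θ ∧ 0 ≤ Real.cos θ) := by
  subst hC hCθ hη
  have hd : (Matrix.diagonal ![(1 : ℝ), -1, 1, -1]) =
      !![1,0,0,0;0,-1,0,0;0,0,1,0;0,0,0,-1] := by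
    ext i j
    fin_cases i <;> fin_cases j <;> simp [Matrix.diagonal, Matrix.vecHead, Matrix.vecTail]
  rw [hd]
  have hs2 := Real.sin_sq_add_cos_sq θ
  refine ⟨?_, ?_, ?_⟩
  · constructor
    · intro h
      have h01 := congrFun (congrFun h 0) 0
      have h02 := congrFun (congrFun h 0) 1
      have h03 := congrFun (congrFun h 1) 0
      have h04 := congrFun (congrFun h 1) 1
      simp [Matrix.mul_apply, Fin.sum_univ_four, Matrix.cons_transpose, Matrix.vecHead, Matrix.vecTail] at h01 h02 h03 h04
      ext i j
      fin_cases i <;> fin_cases j <;>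
        simp [Matrix.mul_apply, Fin.sum_univ_two, Matrix.cons_transpose, Matrix.vecHead, Matrix.vecTail, Matrix.one_apply] <;> nlinarith
    · intro h
      have h01 := congrFun (congrFun h 0) 0
      have h02 := congrFun (congrFun h 0) 1
      have h03 := congrFun (congrFun h 1) 0
      have h04 := congrFun (congrFun h 1) 1
      simp [Matrix.mul_apply, Fin.sum_univ_two, Matrix.cons_transpose, Matrix.vecHead, Matrix.vecTail, Matrix.one_apply] at h01 h02 h03 h04
      ext i j
      fin_cases i <;> fin_cases j <;>
        simp [Matrix.mul_apply, Fin.sum_univ_four, Matrix.cons_transpose, Matrix.vecHead, Matrix.vecTail] <;> nlinarith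
  · ext i j
    fin_cases i <;> fin_cases j <;>
      simp [Matrix.mul_apply, Fin.sum_univ_four, Matrix.cons_transpose, Matrix.vecHead, Matrix.vecTail] <;> nlinarith
  · constructor
    · intro h
      have h1 := h 0 1 (by decide)
      have h2 := h 0 3 (by decide)
      simp at h1 h2
      constructor <;> nlinarith
    · rintro ⟨hs, hc⟩ i j hij
      fin_cases i <;> fin_cases j <;> simp_all <;> nlinarith
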